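/- Let P be a finite 2-wide poset and f : P → ℝ a discrete Morse function. Then there exists a discrete Morse function g on P such that: (1) an element is critical for g iff it is critical for f; (2) g is injective; (3) whenever z < x ≺ y < w (with x ≺ y a covering) and g(x) < g(y), then g(z) < g(y) and g(x) < g(w). -/

import Mathlib

open Finset
open scoped Classical

variable {P : Type*}

/-- `P` is 2-wide: whenever `a ⋖ b ⋖ c` there is `d ≠ b` with `a ⋖ d ⋖ c`. -/
def TwoWide (P : Type*) [PartialOrder P] : Prop :=
  ∀ a b c : P, a ⋖ b → b ⋖ c → ∃ d, d ≠ b ∧ a ⋖ d ∧ d ⋖ c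

/-- `f` is a discrete Morse function. -/
def IsDMF [PartialOrder P] (f : P → ℝ) : Prop :=
  ∀ b : P, {a | a ⋖ b ∧ f b ≤ f a}.Subsingleton ∧ {c | b ⋖ c ∧ f c ≤ f b}.Subsingleton

/-- `b` is (discrete-)critical for `f`. -/
def IsCrit [PartialOrder P] (f : P → ℝ) (b : P) : Prop :=
  (∀ a, a ⋖ b → f a < f b) ∧ (∀ c, b ⋖ c → f b < f c)

/-- `μ` is a parity rank function. -/
def ParityRank [PartialOrder P] (μ : P → ℕ) : Prop :=
  (∀ a, μ a ≤ 1) ∧ (∀ a, IsMin a → μ a = 0) ∧ ∀ a b : P, a ⋖ b → μ b = 1 - μ a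

/-- Sum of `(-1)^(length C)` over all nonempty chains `C` of `P` satisfying `p`. -/
noncomputable def chainSum [PartialOrder P] [Fintype P] (p : Finset P → Prop) : ℤ :=
  ∑ C ∈ Finset.univ.filter
      (fun C : Finset P => C.Nonempty ∧ IsChain (· ≤ ·) (↑C : Set P) ∧ p C),
    (-1 : ℤ) ^ (C.card - 1)

/-- `P` is downward Eulerian with respect to `μ`. -/
def DownEulerian [PartialOrder P] [Fintype P] (μ : P → ℕ) : Prop :=
  ∀ a : P, ¬ IsMin a →
    chainSum (fun C => ∀ x ∈ C, x < a) = (-1 : ℤ) ^ (μ a + 1) + 1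

set_option linter.unusedSectionVars false
set_option maxHeartbeats 1000000

section MorseAux

variable {P : Type*} [PartialOrder P] [Fintype P]

/-- A step of a "generalized V-path": either go up along a cover, or go down
along a matched cover (i.e. a cover `v ⋖ u` with `f u ≤ f v`). -/
private def MStep (f : P → ℝ) (u v : P) : Prop := (u ⋖ v) ∨ (v ⋖ u ∧ f u ≤ f v)

private noncomputable def wt (f : P → ℝ) (u : P) : ℕ :=
  (Finset.univ.filter fun p => f p ≤ f u).card

private lemma wt_le_card (f : P → ℝ) (u : P) : wt f u ≤ Fintype.card P := by
  classical
  have := Finset.card_filter_le (Finset.univ : Finset P) (fun p => f p ≤ f u)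
  rwa [Finset.card_univ] at this

private lemma wt_lt_wt (f : P → ℝ) {u d : P} (h : f u < f d) : wt f u < wt f d := by
  classical
  apply Finset.card_lt_card
  constructor
  · intro p hp
    simp only [Finset.mem_filter, Finset.mem_univ, true_and] at hp ⊢
    exact hp.trans h.le
  · intro hsub
    have hd : d ∈ Finset.univ.filter fun p => f p ≤ f d := by simp
    have := hsub hd
    simp only [Finset.mem_filter, Finset.mem_univ, true_and] at this
    exact absurd this (not_le.2 h)

private noncomputable def mterm (f : P → ℝ) (w : ℕ → P) (i : ℕ) : ℕ :=
  if w i ⋖ w (i+1) ∧ f (w (i+1)) ≤ f (w i) then Fintype.card P + 1 - wt f (w i) else 0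

private lemma mterm_congr (f : P → ℝ) {w w' : ℕ → P} {i i' : ℕ}
    (h1 : w i = w' i') (h2 : w (i+1) = w' (i'+1)) : mterm f w i = mterm f w' i' := by
  unfold mterm
  rw [h1, h2]

private noncomputable def msum (f : P → ℝ) (n : ℕ) (w : ℕ → P) : ℕ :=
  ∑ i ∈ Finset.range n, mterm f w i

/-- Any `u ≤ v` is connected by a saturated chain of covers. -/
private lemma chainWalk : ∀ (u v : P), u ≤ v →
    ∃ (n : ℕ) (w : ℕ → P), w 0 = u ∧ w n = v ∧ ∀ i < n, w i ⋖ w (i+1) := by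
  classical
  have main : ∀ N : ℕ, ∀ u v : P, (Finset.univ.filter fun t => u < t ∧ t ≤ v).card ≤ N →
      u ≤ v → ∃ (n : ℕ) (w : ℕ → P), w 0 = u ∧ w n = v ∧ ∀ i < n, w i ⋖ w (i+1) := by
    intro N
    induction N with
    | zero =>
      intro u v hcard huv
      rcases eq_or_lt_of_le huv with rfl | hlt
      · exact ⟨0, fun _ => u, rfl, rfl, by omega⟩
      · exfalso
        have : v ∈ Finset.univ.filter fun t => u < t ∧ t ≤ v := by simp [hlt]
        have := Finset.card_pos.2 ⟨v, this⟩
        omega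
    | succ N IHN =>
      intro u v hcard huv
      rcases eq_or_lt_of_le huv with rfl | hlt
      · exact ⟨0, fun _ => u, rfl, rfl, by omega⟩
      · set S := Finset.univ.filter fun t => u < t ∧ t ≤ v with hS
        have hvS : v ∈ S := by simp [hS, hlt]
        obtain ⟨m, hmS, hmin⟩ : ∃ m ∈ S, ∀ x ∈ S, ¬ x < m := by
          obtain ⟨m, hm⟩ := Finset.exists_minimal ⟨v, hvS⟩
          exact ⟨m, hm.1, fun x hx hlt => hlt.not_ge (hm.2 hx hlt.le)⟩
        have hm : u < m ∧ m ≤ v := by simpa [hS] using hmS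
        have hcov : u ⋖ m := by
          refine ⟨hm.1, fun z hz1 hz2 => ?_⟩
          exact hmin z (by simp [hS, hz1, le_trans hz2.le hm.2]) hz2
        have hsub : (Finset.univ.filter fun t => m < t ∧ t ≤ v) ⊂ S := by
          constructor
          · intro t ht
            simp only [hS, Finset.mem_filter, Finset.mem_univ, true_and] at ht ⊢
            exact ⟨hm.1.trans ht.1, ht.2⟩
          · intro hsub'
            have := hsub' hmS
            simp only [Finset.mem_filter, Finset.mem_univ, true_and] at this
            exact lt_irrefl m this.1
        have hcard' : (Finset.univ.filter fun t => m < t ∧ t ≤ v).card ≤ N := by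
          have := Finset.card_lt_card hsub
          omega
        obtain ⟨n', w', e0, e1, hsteps⟩ := IHN m v hcard' hm.2
        refine ⟨n' + 1, fun t => if t = 0 then u else w' (t - 1), by simp, by simp [e1], ?_⟩
        intro i hi
        rcases Nat.eq_zero_or_pos i with rfl | hpos
        · simpa [e0] using hcov
        · have h1 : i ≠ 0 := by omega
          have h2 : i + 1 ≠ 0 := by omega
          simp only [h1, h2, if_false]
          have : i - 1 + 1 = i := by omega
          have hst := hsteps (i - 1) (by omega)
          rwa [this] at hst
  intro u v h
  exact main _ u v le_rfl h

/-- Concatenation of two `MStep`-walks, with value bookkeeping. -/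
private lemma concatWalk (f : P → ℝ) {u v t : P} {n₁ n₂ : ℕ} {w₁ w₂ : ℕ → P}
    (e1 : w₁ 0 = u) (e2 : w₁ n₁ = v) (e3 : w₂ 0 = v) (e4 : w₂ n₂ = t)
    (h1 : ∀ i < n₁, MStep f (w₁ i) (w₁ (i+1))) (h2 : ∀ i < n₂, MStep f (w₂ i) (w₂ (i+1))) :
    ∃ W : ℕ → P, W 0 = u ∧ W (n₁+n₂) = t ∧ (∀ i < n₁+n₂, MStep f (W i) (W (i+1))) ∧
      (∀ j < n₁, W j = w₁ j ∧ W (j+1) = w₁ (j+1)) ∧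
      (∀ j < n₂, W (n₁+j) = w₂ j ∧ W (n₁+j+1) = w₂ (j+1)) := by
  classical
  refine ⟨fun s => if s < n₁ then w₁ s else w₂ (s - n₁), ?_, ?_, ?_, ?_, ?_⟩
  · rcases Nat.eq_zero_or_pos n₁ with h | h
    · subst h
      simp only [lt_irrefl, if_false, Nat.sub_zero, e3]
      rw [← e2, e1]
    · simp [h, e1]
  · have : ¬ (n₁ + n₂ < n₁) := by omega
    simp [this, e4]
  · intro i hi
    by_cases hc1 : i + 1 < n₁
    · have : i < n₁ := by omega
      simp only [this, hc1, if_true]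
      exact h1 i this
    · by_cases hc2 : i + 1 = n₁
      · have hi1 : i < n₁ := by omega
        have : ¬ (i + 1 < n₁) := by omega
        simp only [hi1, if_true, this, if_false]
        have : i + 1 - n₁ = 0 := by omega
        rw [this, e3, ← e2, ← hc2]
        exact h1 i hi1
      · have hge : ¬ (i < n₁) := by omega
        have hge2 : ¬ (i + 1 < n₁) := by omega
        simp only [hge, hge2, if_false]
        have heq : i + 1 - n₁ = (i - n₁) + 1 := by omega
        rw [heq]
        exact h2 (i - n₁) (by omega)
  · intro j hj
    constructor
    · simp [hj]
    · by_cases hc : j + 1 < n₁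
      · simp [hc]
      · have h1' : j + 1 = n₁ := by omega
        have : ¬ (j + 1 < n₁) := by omega
        simp only [this, if_false]
        have : j + 1 - n₁ = 0 := by omega
        rw [this, e3, ← e2, h1']
  · intro j hj
    constructor
    · have : ¬ (n₁ + j < n₁) := by omega
      simp only [this, if_false]
      congr 1
      omega
    · have : ¬ (n₁ + j + 1 < n₁) := by omega
      simp only [this, if_false]
      congr 1
      omega


/-- Surgery: a closed walk with a strictly increasing ("good") cover step and a
"bad" step (matched up-cover) at position `i` with `i+1 < n` can be shortened
or improved, decreasing the measure. Uses 2-wideness. -/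
private lemma surgery (hw : TwoWide P) (f : P → ℝ) (hf : IsDMF f)
    {n : ℕ} {w : ℕ → P} {i : ℕ} (hi1 : i + 1 < n)
    (H1 : ∀ t < n, MStep f (w t) (w (t+1))) (Hc : w n = w 0)
    (hbc : w i ⋖ w (i+1)) (hbl : f (w (i+1)) ≤ f (w i))
    (hgood : ∃ j, j < n ∧ w j ⋖ w (j+1) ∧ f (w j) < f (w (j+1))) :
    ∃ (n' : ℕ) (w' : ℕ → P), (∀ t < n', MStep f (w' t) (w' (t+1))) ∧ w' n' = w' 0 ∧
      (∃ j', j' < n' ∧ w' j' ⋖ w' (j'+1) ∧ f (w' j') < f (w' (j'+1))) ∧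
      n' * (Fintype.card P + 2) + msum f n' w' <
        n * (Fintype.card P + 2) + msum f n w := by
  classical
  rcases H1 (i+1) hi1 with hup | ⟨hcv, hfvc⟩
  · -- the step after the bad step goes up: rewire through another element
    obtain ⟨d, hdne, hud, hdc⟩ := hw (w i) (w (i+1)) (w (i+1+1)) hbc hup
    have hfud : f (w i) < f d := by
      by_contra hle
      push_neg at hle
      exact hdne ((hf (w i)).2 ⟨hud, hle⟩ ⟨hbc, hbl⟩)
    set W : ℕ → P := Function.update w (i+1) d with hWdef
    have hW1 : W (i+1) = d := Function.update_self _ _ _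
    have hWo : ∀ t, t ≠ i+1 → W t = w t := fun t ht => Function.update_of_ne ht _ _
    refine ⟨n, W, ?_, ?_, ?_, ?_⟩
    · intro t ht
      by_cases h1 : t = i
      · subst h1
        rw [hWo t (by omega), hW1]
        exact Or.inl hud
      · by_cases h2 : t = i + 1
        · subst h2
          rw [hW1, hWo (i+1+1) (by omega)]
          exact Or.inl hdc
        · rw [hWo t h2, hWo (t+1) (by omega)]
          exact H1 t ht
    · rw [hWo n (by omega), hWo 0 (by omega)]
      exact Hc
    · refine ⟨i, by omega, ?_, ?_⟩
      · rw [hWo i (by omega), hW1]; exact hud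
      · rw [hWo i (by omega), hW1]; exact hfud
    · have hmem_i : i ∈ Finset.range n := by simp; omega
      have hmem_i1 : i + 1 ∈ (Finset.range n).erase i := by
        simp [Finset.mem_erase]; omega
      have hsplit : ∀ g : ℕ → ℕ, ∑ t ∈ Finset.range n, g t =
          g i + (g (i+1) + ∑ t ∈ ((Finset.range n).erase i).erase (i+1), g t) := by
        intro g
        rw [← Finset.add_sum_erase _ g hmem_i, ← Finset.add_sum_erase _ g hmem_i1]
      have hOther : ∑ t ∈ ((Finset.range n).erase i).erase (i+1), mterm f W t =
          ∑ t ∈ ((Finset.range n).erase i).erase (i+1), mterm f w t := by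
        refine Finset.sum_congr rfl fun t ht => ?_
        have h1 : t ≠ i + 1 := (Finset.mem_erase.1 ht).1
        have h2 : t ≠ i := (Finset.mem_erase.1 (Finset.mem_erase.1 ht).2).1
        exact mterm_congr f (hWo t h1) (hWo (t+1) (by omega))
      have hWi : mterm f W i = 0 := by
        unfold mterm
        rw [hWo i (by omega), hW1, if_neg]
        rintro ⟨-, hle⟩
        exact absurd hle (not_le.2 hfud)
      have hwi : mterm f w i = Fintype.card P + 1 - wt f (w i) := by
        unfold mterm
        rw [if_pos ⟨hbc, hbl⟩]
      have hWi1 : mterm f W (i+1) ≤ Fintype.card P - wt f (w i) := by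
        unfold mterm
        rw [hW1]
        split_ifs with h
        · have hwd := wt_lt_wt f hfud
          omega
        · omega
      have hwti : wt f (w i) ≤ Fintype.card P := wt_le_card f (w i)
      have e1 : msum f n W = mterm f W i + (mterm f W (i+1) +
          ∑ t ∈ ((Finset.range n).erase i).erase (i+1), mterm f W t) := hsplit _
      have e2 : msum f n w = mterm f w i + (mterm f w (i+1) +
          ∑ t ∈ ((Finset.range n).erase i).erase (i+1), mterm f w t) := hsplit _
      have : msum f n W < msum f n w := by
        rw [e1, e2, hOther]
        omega
      omega
  · -- the step after the bad step goes down: it must backtrack; excise it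
    have hcu : w (i+1+1) = w i := (hf (w (i+1))).1 ⟨hcv, hfvc⟩ ⟨hbc, hbl⟩
    set W : ℕ → P := fun t => if t ≤ i then w t else w (t+2) with hWdef
    have hWle : ∀ t, t ≤ i → W t = w t := fun t ht => if_pos ht
    have hWgt : ∀ t, i < t → W t = w (t+2) := fun t ht => if_neg (by omega)
    have hii : i ≤ n - 2 := by omega
    have hcu' : w (i+2) = w i := hcu
    refine ⟨n - 2, W, ?_, ?_, ?_, ?_⟩
    · intro t ht
      rcases lt_trichotomy t i with h | h | h
      · rw [hWle t (by omega), hWle (t+1) (by omega)]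
        exact H1 t (by omega)
      · subst h
        rw [hWle t le_rfl, hWgt (t+1) (by omega)]
        have : MStep f (w (t+2)) (w (t+2+1)) := H1 (t+2) (by omega)
        rw [hcu'] at this
        have he : t + 1 + 2 = t + 2 + 1 := by omega
        rw [he]
        exact this
      · rw [hWgt t h, hWgt (t+1) (by omega)]
        have he : t + 1 + 2 = t + 2 + 1 := by omega
        rw [he]
        exact H1 (t+2) (by omega)
    · by_cases hc : n - 2 ≤ i
      · have hieq : i = n - 2 := le_antisymm hii hc
        rw [hWle _ hc, hWle 0 (by omega)]
        have h2 : i + 2 = n := by omega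
        calc w (n-2) = w i := by rw [hieq]
          _ = w (i+2) := hcu'.symm
          _ = w 0 := by rw [h2]; exact Hc
      · rw [hWgt _ (by omega), hWle 0 (by omega)]
        have h2 : n - 2 + 2 = n := by omega
        rw [h2]
        exact Hc
    · obtain ⟨j, hjn, hjc, hjl⟩ := hgood
      have hji : j ≠ i := by
        intro h
        subst h
        exact absurd hjl (not_lt.2 hbl)
      have hji1 : j ≠ i + 1 := by
        intro h
        subst h
        exact absurd hcv.lt hjc.lt.asymm
      rcases lt_or_gt_of_ne hji with hlt | hgt
      · refine ⟨j, by omega, ?_, ?_⟩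
        · rw [hWle j (by omega), hWle (j+1) (by omega)]; exact hjc
        · rw [hWle j (by omega), hWle (j+1) (by omega)]; exact hjl
      · have hj2 : i + 2 ≤ j := by omega
        have e1 : W (j-2) = w j := by
          rcases eq_or_lt_of_le (show i ≤ j - 2 by omega) with he | hlt2
          · calc W (j-2) = w (j-2) := hWle (j-2) (by omega)
              _ = w i := by rw [← he]
              _ = w (i+2) := hcu'.symm
              _ = w j := by rw [show i + 2 = j from by omega]
          · rw [hWgt (j-2) hlt2]
            congr 1
            omega
        have e2 : W (j-2+1) = w (j+1) := by
          rw [hWgt (j-2+1) (by omega)]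
          congr 1
          omega
        refine ⟨j - 2, by omega, ?_, ?_⟩
        · rw [e1, e2]; exact hjc
        · rw [e1, e2]; exact hjl
    · set σ : ℕ → ℕ := fun t => if t < i then t else t + 2 with hσ
      have hterm : ∀ t ∈ Finset.range (n-2), mterm f W t = mterm f w (σ t) := by
        intro t ht
        rw [Finset.mem_range] at ht
        rcases lt_trichotomy t i with h | h | h
        · have hs : σ t = t := if_pos h
          rw [hs]
          exact mterm_congr f (hWle t (by omega)) (hWle (t+1) (by omega))
        · subst h
          have hs : σ t = t + 2 := if_neg (by omega)
          rw [hs]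
          refine mterm_congr f ?_ ?_
          · rw [hWle t le_rfl, hcu']
          · rw [hWgt (t+1) (by omega)]
        · have hs : σ t = t + 2 := if_neg (by omega)
          rw [hs]
          refine mterm_congr f ?_ ?_
          · exact hWgt t h
          · rw [hWgt (t+1) (by omega)]
      have hmW : msum f (n-2) W = ∑ t ∈ Finset.range (n-2), mterm f w (σ t) :=
        Finset.sum_congr rfl hterm
      have hinj : ∀ x ∈ Finset.range (n-2), ∀ y ∈ Finset.range (n-2), σ x = σ y → x = y := by
        intro x _ y _ hxy
        simp only [hσ] at hxy
        split_ifs at hxy <;> omega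
      have himg : (Finset.range (n-2)).image σ ⊆ Finset.range n := by
        intro s hs
        obtain ⟨t, ht, rfl⟩ := Finset.mem_image.1 hs
        rw [Finset.mem_range] at ht ⊢
        simp only [hσ]
        split_ifs <;> omega
      have hle : msum f (n-2) W ≤ msum f n w := by
        calc msum f (n-2) W = ∑ t ∈ (Finset.range (n-2)).image σ, mterm f w t := by
              rw [hmW, Finset.sum_image hinj]
          _ ≤ ∑ t ∈ Finset.range n, mterm f w t := Finset.sum_le_sum_of_subset himg
          _ = msum f n w := rfl
      have hstep : (n-2) * (Fintype.card P + 2) + msum f (n-2) W <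
          (n-2) * (Fintype.card P + 2) + (2 * (Fintype.card P + 2) + msum f n w) :=
        Nat.add_lt_add_left (by omega) _
      calc (n-2) * (Fintype.card P + 2) + msum f (n-2) W
          < (n-2) * (Fintype.card P + 2) + (2 * (Fintype.card P + 2) + msum f n w) := hstep
        _ = ((n-2) + 2) * (Fintype.card P + 2) + msum f n w := by
            rw [Nat.add_mul]
            omega
        _ = n * (Fintype.card P + 2) + msum f n w := by
            rw [show n - 2 + 2 = n from by omega]

/-- Rotating a closed walk. -/
private lemma rotate (f : P → ℝ) {n : ℕ} (hn : 0 < n) (w : ℕ → P) (k : ℕ) (hk : k < n)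
    (H1 : ∀ t < n, MStep f (w t) (w (t+1))) (Hc : w n = w 0) :
    ∃ w' : ℕ → P, (∀ t < n, MStep f (w' t) (w' (t+1))) ∧ w' n = w' 0 ∧
      msum f n w' = msum f n w ∧
      (∀ s, s < n → (s + n - k) % n < n ∧ w' ((s + n - k) % n) = w s ∧
        w' ((s + n - k) % n + 1) = w (s+1)) := by
  classical
  set w' : ℕ → P := fun t => w ((k + t) % n) with hw'
  have wrap : ∀ s, s < n → w ((s+1) % n) = w (s+1) := by
    intro s hs
    by_cases h : s + 1 < n
    · rw [Nat.mod_eq_of_lt h]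
    · have h' : s + 1 = n := by omega
      rw [h', Nat.mod_self]
      exact Hc.symm
  have hval : ∀ t, w' (t+1) = w ((k+t) % n + 1) := by
    intro t
    show w ((k + (t+1)) % n) = w ((k+t) % n + 1)
    have h1 : (k + (t+1)) % n = ((k+t) % n + 1) % n := by
      rw [Nat.mod_add_mod, ← Nat.add_assoc]
    rw [h1, wrap _ (Nat.mod_lt _ hn)]
  have hbase : ∀ t, w' t = w ((k + t) % n) := fun t => rfl
  refine ⟨w', ?_, ?_, ?_, ?_⟩
  · intro t ht
    rw [hval t]
    exact H1 _ (Nat.mod_lt _ hn)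
  · show w ((k + n) % n) = w ((k + 0) % n)
    rw [Nat.add_mod_right, Nat.add_zero, Nat.mod_eq_of_lt hk]
  · unfold msum
    refine Finset.sum_nbij' (i := fun t => (k + t) % n) (j := fun s => (s + n - k) % n)
      ?_ ?_ ?_ ?_ ?_
    · intro a ha
      rw [Finset.mem_range] at ha ⊢
      exact Nat.mod_lt _ hn
    · intro a ha
      rw [Finset.mem_range] at ha ⊢
      exact Nat.mod_lt _ hn
    · intro a ha
      rw [Finset.mem_range] at ha
      show ((k + a) % n + n - k) % n = a
      have h1 : (k + a) % n + n - k = (k + a) % n + (n - k) := by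
        have := Nat.mod_lt (k + a) hn
        omega
      rw [h1, Nat.mod_add_mod, show (k + a) + (n - k) = a + n from by omega,
        Nat.add_mod_right, Nat.mod_eq_of_lt ha]
    · intro a ha
      rw [Finset.mem_range] at ha
      show (k + (a + n - k) % n) % n = a
      rw [Nat.add_mod_mod, show k + (a + n - k) = a + n from by omega,
        Nat.add_mod_right, Nat.mod_eq_of_lt ha]
    · intro a _
      exact mterm_congr f rfl (hval a)
  · intro s hs
    refine ⟨Nat.mod_lt _ hn, ?_, ?_⟩
    · rw [hbase, Nat.add_mod_mod, show k + (s + n - k) = s + n from by omega,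
        Nat.add_mod_right, Nat.mod_eq_of_lt hs]
    · rw [hval, Nat.add_mod_mod, show k + (s + n - k) = s + n from by omega,
        Nat.add_mod_right, Nat.mod_eq_of_lt hs]

/-- No closed generalized V-path with a strictly increasing cover step. -/
private lemma no_good_cycle (hw : TwoWide P) (f : P → ℝ) (hf : IsDMF f) :
    ∀ μ n (w : ℕ → P), n * (Fintype.card P + 2) + msum f n w ≤ μ →
      (∀ t < n, MStep f (w t) (w (t+1))) → w n = w 0 →
      ∀ j, j < n → w j ⋖ w (j+1) → f (w j) < f (w (j+1)) → False := by
  intro μ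
  induction μ using Nat.strong_induction_on with
  | _ μ IH =>
    intro n w hμ H1 Hc j hj hjc hjf
    by_cases hbad : ∃ i, i < n ∧ w i ⋖ w (i+1) ∧ f (w (i+1)) ≤ f (w i)
    · obtain ⟨i, hin, hbc, hbl⟩ := hbad
      have hn0 : 0 < n := by omega
      have hn2 : 2 ≤ n := by
        by_contra h
        have hn1 : n = 1 := by omega
        have hi0 : i = 0 := by omega
        subst hi0
        rw [hn1] at Hc
        rw [Hc] at hbc
        exact absurd hbc.lt (lt_irrefl _)
      by_cases hi1 : i + 1 < n
      · obtain ⟨n', w', H1', Hc', hg', hmeas⟩ :=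
          surgery hw f hf hi1 H1 Hc hbc hbl ⟨j, hj, hjc, hjf⟩
        obtain ⟨j', hj1, hj2, hj3⟩ := hg'
        exact IH (n' * (Fintype.card P + 2) + msum f n' w')
          (lt_of_lt_of_le hmeas hμ) n' w' le_rfl H1' Hc' j' hj1 hj2 hj3
      · -- rotate so that the bad step is at position 0
        obtain ⟨w', H1', Hc', hms, hfwd⟩ := rotate f hn0 w i hin H1 Hc
        obtain ⟨_, hb1, hb2⟩ := hfwd i hin
        have hzero : (i + n - i) % n = 0 := by
          rw [show i + n - i = n from by omega, Nat.mod_self]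
        rw [hzero] at hb1 hb2
        obtain ⟨htjlt, htj1, htj2⟩ := hfwd j hj
        have hbc' : w' 0 ⋖ w' (0+1) := by rw [hb1, hb2]; exact hbc
        have hbl' : f (w' (0+1)) ≤ f (w' 0) := by rw [hb1, hb2]; exact hbl
        have hgood' : ∃ j', j' < n ∧ w' j' ⋖ w' (j'+1) ∧ f (w' j') < f (w' (j'+1)) := by
          refine ⟨(j + n - i) % n, htjlt, ?_, ?_⟩
          · rw [htj1, htj2]; exact hjc
          · rw [htj1, htj2]; exact hjf
        obtain ⟨n', w'', H1'', Hc'', hg'', hmeas⟩ :=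
          surgery hw f hf (show 0 + 1 < n by omega) H1' Hc' hbc' hbl' hgood'
        obtain ⟨j', hj1, hj2, hj3⟩ := hg''
        rw [hms] at hmeas
        exact IH (n' * (Fintype.card P + 2) + msum f n' w'')
          (lt_of_lt_of_le hmeas hμ) n' w'' le_rfl H1'' Hc'' j' hj1 hj2 hj3
    · push_neg at hbad
      have mono : ∀ t a, a + t ≤ n → f (w a) ≤ f (w (a + t)) := by
        intro t
        induction t with
        | zero => intro a _; simp
        | succ t IHt =>
          intro a ha
          have h1 : f (w a) ≤ f (w (a + t)) := IHt a (by omega)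
          have h2 : f (w (a + t)) ≤ f (w (a + t + 1)) := by
            rcases H1 (a + t) (by omega) with hup | ⟨_, hle⟩
            · exact (hbad (a + t) (by omega) hup).le
            · exact hle
          have he : a + (t + 1) = a + t + 1 := by omega
          rw [he]
          exact h1.trans h2
      have h1 : f (w (j+1)) ≤ f (w n) := by
        have := mono (n - (j+1)) (j+1) (by omega)
        rwa [show j + 1 + (n - (j+1)) = n from by omega] at this
      have h2 : f (w 0) ≤ f (w j) := by
        have := mono j 0 (by omega)
        rwa [Nat.zero_add] at this
      rw [Hc] at h1
      exact lt_irrefl _ (hjf.trans_le (h1.trans h2))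

/-- The auxiliary reachability relation: descend along matched covers, or jump
from below an unmatched cover to above it. -/
private def Erel (f : P → ℝ) (u v : P) : Prop :=
  (v ⋖ u ∧ f u ≤ f v) ∨ (∃ x y, x ⋖ y ∧ f x < f y ∧ u ≤ x ∧ y ≤ v)

private def WalkTag (f : P → ℝ) (a b : P) : Prop :=
  ∃ (n : ℕ) (w : ℕ → P), w 0 = a ∧ w n = b ∧ (∀ i < n, MStep f (w i) (w (i+1))) ∧
    ((∃ j, j < n ∧ w j ⋖ w (j+1) ∧ f (w j) < f (w (j+1))) ∨ b < a)

private lemma erel_walk (f : P → ℝ) {a b : P} (h : Erel f a b) : WalkTag f a b := by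
  classical
  rcases h with ⟨hcov, hle⟩ | ⟨x, y, hxy, hflt, hax, hyb⟩
  · refine ⟨1, fun s => if s = 0 then a else b, by simp, by simp, ?_, Or.inr hcov.lt⟩
    intro i hi
    have hi0 : i = 0 := by omega
    subst hi0
    simp only [if_pos rfl, if_neg one_ne_zero]
    exact Or.inr ⟨hcov, hle⟩
  · obtain ⟨n₁, w₁, e10, e11, hs1⟩ := chainWalk a x hax
    obtain ⟨n₂, w₂, e20, e21, hs2⟩ := chainWalk y b hyb
    set wm : ℕ → P := fun s => if s = 0 then x else y with hwm
    have em0 : wm 0 = x := rfl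
    have em1 : wm 1 = y := rfl
    have hsm : ∀ i < 1, MStep f (wm i) (wm (i+1)) := by
      intro i hi
      have hi0 : i = 0 := by omega
      subst hi0
      simp only [hwm, if_pos rfl, if_neg one_ne_zero]
      exact Or.inl hxy
    have hs1' : ∀ i < n₁, MStep f (w₁ i) (w₁ (i+1)) := fun i hi => Or.inl (hs1 i hi)
    have hs2' : ∀ i < n₂, MStep f (w₂ i) (w₂ (i+1)) := fun i hi => Or.inl (hs2 i hi)
    obtain ⟨W1, f10, f11, hS1, hv1, hv2⟩ := concatWalk f e10 e11 em0 em1 hs1' hsm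
    obtain ⟨W, g0, g1, hS, hu1, hu2⟩ := concatWalk f f10 f11 e20 e21 hS1 hs2'
    have h1 := hu1 n₁ (by omega)
    have h2 := hv2 0 (by omega)
    have hWn : W n₁ = x := by
      rw [h1.1]
      have := h2.1
      rwa [Nat.add_zero] at this
    have hWn1 : W (n₁+1) = y := by
      rw [h1.2]
      have := h2.2
      rwa [Nat.add_zero] at this
    refine ⟨n₁ + 1 + n₂, W, g0, g1, hS, Or.inl ⟨n₁, by omega, ?_, ?_⟩⟩
    · rw [hWn, hWn1]; exact hxy
    · rw [hWn, hWn1]; exact hflt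

private lemma walk_combine (f : P → ℝ) {a b c : P}
    (h1 : WalkTag f a b) (h2 : WalkTag f b c) : WalkTag f a c := by
  obtain ⟨n₁, w₁, e10, e11, hs1, tag1⟩ := h1
  obtain ⟨n₂, w₂, e20, e21, hs2, tag2⟩ := h2
  obtain ⟨W, g0, g1, hS, hv1, hv2⟩ := concatWalk f e10 e11 e20 e21 hs1 hs2
  refine ⟨n₁ + n₂, W, g0, g1, hS, ?_⟩
  rcases tag1 with ⟨j, hj, hjc, hjl⟩ | hlt1
  · refine Or.inl ⟨j, by omega, ?_, ?_⟩
    · rw [(hv1 j hj).1, (hv1 j hj).2]; exact hjc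
    · rw [(hv1 j hj).1, (hv1 j hj).2]; exact hjl
  · rcases tag2 with ⟨j, hj, hjc, hjl⟩ | hlt2
    · refine Or.inl ⟨n₁ + j, by omega, ?_, ?_⟩
      · rw [(hv2 j hj).1, (hv2 j hj).2]; exact hjc
      · rw [(hv2 j hj).1, (hv2 j hj).2]; exact hjl
    · exact Or.inr (hlt2.trans hlt1)

private lemma transGen_tag (f : P → ℝ) {a b : P}
    (h : Relation.TransGen (Erel f) a b) : WalkTag f a b := by
  induction h with
  | single h' => exact erel_walk f h'
  | tail _ hE IH => exact walk_combine f IH (erel_walk f hE)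

private lemma erel_irrefl (hw : TwoWide P) (f : P → ℝ) (hf : IsDMF f) :
    ∀ a : P, ¬ Relation.TransGen (Erel f) a a := by
  intro a h
  obtain ⟨n, w, h0, hn, hs, hg | hlt⟩ := transGen_tag f h
  · obtain ⟨j, hj, hc, hl⟩ := hg
    exact no_good_cycle hw f hf (n * (Fintype.card P + 2) + msum f n w) n w le_rfl hs
      (by rw [hn, h0]) j hj hc hl
  · exact lt_irrefl a hlt

end MorseAux

theorem stmt10 [PartialOrder P] [Fintype P] (hw : TwoWide P) (f : P → ℝ)
    (hf : IsDMF f) :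
    ∃ g : P → ℝ, IsDMF g ∧ (∀ b : P, IsCrit f b ↔ IsCrit g b) ∧ Function.Injective g ∧
      ∀ z x y w : P, z < x → x ⋖ y → y < w → g x < g y → g z < g y ∧ g x < g w := by
  classical
  set r : P → P → Prop := fun u v => Relation.TransGen (Erel f) u v ∨ u = v with hr
  haveI hrefl : IsRefl P r := ⟨fun a => Or.inr rfl⟩
  haveI htrans : IsTrans P r := by
    constructor
    rintro a b c (hab | rfl) (hbc | rfl)
    · exact Or.inl (hab.trans hbc)
    · exact Or.inl hab
    · exact Or.inl hbc
    · exact Or.inr rfl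
  haveI hanti : IsAntisymm P r := by
    constructor
    rintro a b (hab | rfl) h2
    · rcases h2 with hba | rfl
      · exact absurd (hab.trans hba) (erel_irrefl hw f hf a)
      · rfl
    · rfl
  haveI hpo : IsPartialOrder P r := { }
  obtain ⟨s, hlin, hrs⟩ := extend_partialOrder r
  haveI := hlin
  set g : P → ℝ := fun v => ((Finset.univ.filter fun u => s u v).card : ℝ) with hg
  have hslt : ∀ u v : P, s u v → u ≠ v → g u < g v := by
    intro u v hsuv hne
    have hsub : (Finset.univ.filter fun t => s t u) ⊂ (Finset.univ.filter fun t => s t v) := by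
      constructor
      · intro t ht
        simp only [Finset.mem_filter, Finset.mem_univ, true_and] at ht ⊢
        exact IsTrans.trans t u v ht hsuv
      · intro hs'
        have hv : v ∈ Finset.univ.filter fun t => s t v := by
          simp only [Finset.mem_filter, Finset.mem_univ, true_and]
          exact Std.Refl.refl v
        have := hs' hv
        simp only [Finset.mem_filter, Finset.mem_univ, true_and] at this
        exact hne (Std.Antisymm.antisymm _ _ hsuv this)
    have := Finset.card_lt_card hsub
    simp only [hg]
    exact_mod_cast this
  have hmono : ∀ u v : P, Relation.TransGen (Erel f) u v → g u < g v := by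
    intro u v h
    have hne : u ≠ v := by
      rintro rfl
      exact erel_irrefl hw f hf u h
    exact hslt u v (hrs u v (Or.inl h)) hne
  have hup : ∀ a b : P, a ⋖ b → f a < f b → g a < g b := by
    intro a b hab hlt
    exact hmono a b (Relation.TransGen.single (Or.inr ⟨a, b, hab, hlt, le_rfl, le_rfl⟩))
  have hdown : ∀ a b : P, a ⋖ b → f b ≤ f a → g b < g a := by
    intro a b hab hle
    exact hmono b a (Relation.TransGen.single (Or.inl ⟨hab, hle⟩))
  have hinj : Function.Injective g := by
    intro u v huv
    by_contra hne
    rcases Std.Total.total (r := s) u v with h | h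
    · exact absurd huv (ne_of_lt (hslt u v h hne))
    · exact absurd huv.symm (ne_of_lt (hslt v u h (Ne.symm hne)))
  refine ⟨g, ?_, ?_, hinj, ?_⟩
  · intro b
    constructor
    · refine Set.Subsingleton.anti (hf b).1 ?_
      rintro a ⟨hab, hle⟩
      refine ⟨hab, ?_⟩
      by_contra hcon
      push_neg at hcon
      exact absurd hle (not_le.2 (hup a b hab hcon))
    · refine Set.Subsingleton.anti (hf b).2 ?_
      rintro c ⟨hbc, hle⟩
      refine ⟨hbc, ?_⟩
      by_contra hcon
      push_neg at hcon
      exact absurd hle (not_le.2 (hup b c hbc hcon))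
  · intro b
    constructor
    · rintro ⟨h1, h2⟩
      exact ⟨fun a hab => hup a b hab (h1 a hab), fun c hbc => hup b c hbc (h2 c hbc)⟩
    · rintro ⟨h1, h2⟩
      refine ⟨fun a hab => ?_, fun c hbc => ?_⟩
      · by_contra hcon
        push_neg at hcon
        exact absurd (h1 a hab) (not_lt.2 (hdown a b hab hcon).le)
      · by_contra hcon
        push_neg at hcon
        exact absurd (h2 c hbc) (not_lt.2 (hdown b c hbc hcon).le)
  · intro z x y w hzx hxy hyw hgxy
    have hfxy : f x < f y := by
      by_contra hcon
      push_neg at hcon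
      exact absurd hgxy (not_lt.2 (hdown x y hxy hcon).le)
    constructor
    · exact hmono z y (Relation.TransGen.single (Or.inr ⟨x, y, hxy, hfxy, hzx.le, le_rfl⟩))
    · exact hmono x w (Relation.TransGen.single (Or.inr ⟨x, y, hxy, hfxy, le_rfl, hyw.le⟩))
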